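/- Let c : Fin m → ℝ with c(i) > 0 for every i and Σ_i 1/c(i) ≤ 1. Let P : ℕ → Fin m → ℕ satisfy P(0, i) = 0 for all i, and for each t let P(t+1) be obtained from P(t) by incrementing the value at a single index i_t which minimizes c(i)·(P(t, i) + 1) over all i ∈ Fin m (any minimizer may be chosen). Then for every r ∈ ℕ and every i ∈ Fin m, P(r, i) ≥ ⌊r / c(i)⌋. -/

import Mathlib

/-!
STATEMENT: Let `c : Fin m → ℝ` with `c(i) > 0` for every `i` and `Σ_i 1/c(i) ≤ 1`.
Let `P : ℕ → Fin m → ℕ` satisfy `P(0, i) = 0` for all `i`, and for each `t` let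
`P(t+1)` be obtained from `P(t)` by incrementing the value at a single index
`i_t` which minimizes `c(i)·(P(t, i) + 1)` over all `i ∈ Fin m` (any minimizer
may be chosen).  Then for every `r ∈ ℕ` and every `i ∈ Fin m`,
`P(r, i) ≥ ⌊r / c(i)⌋`.
-/

theorem greedy_punishing_counts (m : ℕ) (hm : 1 ≤ m)
    (c : Fin m → ℝ) (hc : ∀ i, 0 < c i) (hsum : ∑ i, 1 / c i ≤ 1)
    (P : ℕ → Fin m → ℕ) (h0 : ∀ i, P 0 i = 0)
    (hstep : ∀ t : ℕ, ∃ i : Fin m,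
      (∀ j : Fin m, c i * ((P t i : ℝ) + 1) ≤ c j * ((P t j : ℝ) + 1)) ∧
      P (t + 1) = Function.update (P t) i (P t i + 1)) :
    ∀ (r : ℕ) (i : Fin m), ⌊(r : ℝ) / c i⌋ ≤ (P r i : ℤ) := by
  choose idx hmin hupd using hstep
  have hc1 : ∀ i, 1 ≤ c i := by
    intro i
    have h1 : 1 / c i ≤ 1 :=
      le_trans (Finset.single_le_sum (f := fun j => 1 / c j)
        (fun j _ => (one_div_pos.mpr (hc j)).le) (Finset.mem_univ i)) hsum
    exact (div_le_one (hc i)).mp h1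
  have hstep1 : ∀ t j, P t j ≤ P (t + 1) j := by
    intro t j
    rw [hupd t, Function.update_apply]
    split
    · next h => subst h; omega
    · exact le_refl _
  have hmono : ∀ j, Monotone fun t => P t j :=
    fun j => monotone_nat_of_le_succ (fun t => hstep1 t j)
  have hkey : ∀ t u, t < u → P t (idx t) + 1 ≤ P u (idx t) := by
    intro t u htu
    have h1 : P (t + 1) (idx t) = P t (idx t) + 1 := by rw [hupd t]; simp
    calc P t (idx t) + 1 = P (t + 1) (idx t) := h1.symm
      _ ≤ P u (idx t) := hmono (idx t) htu
  intro r i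
  have key : (r : ℝ) < c i * ((P r i : ℝ) + 1) := by
    by_contra hcon
    push_neg at hcon
    set S : Finset (Fin m × ℕ) :=
      (Finset.univ ×ˢ Finset.Icc 1 r).filter (fun p => c p.1 * (p.2 : ℝ) ≤ (r : ℝ)) with hS
    -- upper bound on |S|
    have hfiber : ∀ k : Fin m, (S.filter fun p => p.1 = k).card ≤ ⌊(r : ℝ) / c k⌋₊ := by
      intro k
      have : (S.filter fun p => p.1 = k).card ≤ (Finset.Icc 1 ⌊(r : ℝ) / c k⌋₊).card := by
        apply Finset.card_le_card_of_injOn Prod.snd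
        · intro p hp
          replace hp : p ∈ S.filter (fun p => p.1 = k) := hp
          simp only [hS, Finset.mem_filter, Finset.mem_product, Finset.mem_Icc,
            Finset.mem_univ, true_and] at hp
          obtain ⟨⟨⟨h1, _⟩, hle⟩, hk⟩ := hp
          refine Finset.mem_Icc.mpr ⟨h1, ?_⟩
          exact Nat.le_floor ((le_div_iff₀ (hc k)).mpr (by rw [← hk]; linarith))
        · intro p hp q hq hpq
          simp only [Finset.mem_coe, Finset.mem_filter] at hp hq
          exact Prod.ext (hp.2.trans hq.2.symm) hpq
      simpa using this
    have hcardS : S.card = ∑ k, (S.filter fun p => p.1 = k).card :=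
      Finset.card_eq_sum_card_fiberwise (fun p _ => Finset.mem_univ p.1)
    have hfloorsum : (∑ k, (⌊(r : ℝ) / c k⌋₊ : ℝ)) ≤ (r : ℝ) := by
      calc ∑ k, (⌊(r : ℝ) / c k⌋₊ : ℝ) ≤ ∑ k, (r : ℝ) / c k :=
            Finset.sum_le_sum (fun k _ => Nat.floor_le (div_nonneg (Nat.cast_nonneg r) (hc k).le))
        _ = (r : ℝ) * ∑ k, 1 / c k := by
            rw [Finset.mul_sum]
            exact Finset.sum_congr rfl (fun k _ => (mul_one_div _ _).symm)
        _ ≤ (r : ℝ) * 1 := by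
            apply mul_le_mul_of_nonneg_left hsum (by positivity)
        _ = (r : ℝ) := mul_one _
    have hub : S.card ≤ r := by
      have h1 : S.card ≤ ∑ k, ⌊(r : ℝ) / c k⌋₊ := by
        rw [hcardS]; exact Finset.sum_le_sum (fun k _ => hfiber k)
      have h2 : (∑ k, ⌊(r : ℝ) / c k⌋₊ : ℝ) ≤ (r : ℝ) := by push_cast; exact hfloorsum
      have h3 : (∑ k, ⌊(r : ℝ) / c k⌋₊) ≤ r := by exact_mod_cast h2
      omega
    -- lower bound on |S|
    set g : ℕ → Fin m × ℕ :=
      fun t => if t < r then (idx t, P t (idx t) + 1) else (i, P r i + 1) with hg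
    have hmemS : ∀ (k : Fin m) (n : ℕ), c k * ((n : ℝ) + 1) ≤ (r : ℝ) → (k, n + 1) ∈ S := by
      intro k n hn
      have hnr : ((n : ℝ) + 1) ≤ (r : ℝ) := by
        calc ((n : ℝ) + 1) ≤ c k * ((n : ℝ) + 1) :=
              le_mul_of_one_le_left (by positivity) (hc1 k)
          _ ≤ (r : ℝ) := hn
      have hnr' : n + 1 ≤ r := by exact_mod_cast hnr
      simp only [hS, Finset.mem_filter, Finset.mem_product, Finset.mem_Icc,
        Finset.mem_univ, true_and]
      refine ⟨⟨by omega, hnr'⟩, by push_cast; linarith⟩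
    have himg : ∀ t ∈ Finset.range (r + 1), g t ∈ S := by
      intro t ht
      rw [Finset.mem_range] at ht
      by_cases h : t < r
      · simp only [hg, if_pos h]
        apply hmemS
        calc c (idx t) * ((P t (idx t) : ℝ) + 1) ≤ c i * ((P t i : ℝ) + 1) := hmin t i
          _ ≤ c i * ((P r i : ℝ) + 1) := by
              have hP : P t i ≤ P r i := hmono i (le_of_lt h)
              have : ((P t i : ℝ)) ≤ ((P r i : ℝ)) := by exact_mod_cast hP
              nlinarith [hc i]
          _ ≤ (r : ℝ) := hcon
      · simp only [hg, if_neg h]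
        exact hmemS i (P r i) hcon
    have hne : ∀ a b, a < b → b ≤ r → g a ≠ g b := by
      intro a b hab hbr hEq
      have har : a < r := lt_of_lt_of_le hab hbr
      by_cases h : b < r
      · simp only [hg, if_pos har, if_pos h, Prod.mk.injEq] at hEq
        obtain ⟨h1, h2⟩ := hEq
        have h3 := hkey a b hab
        rw [h1] at h3 h2
        omega
      · have hbr' : b = r := by omega
        rw [hbr'] at hEq
        simp only [hg, if_pos har, if_neg (lt_irrefl r), Prod.mk.injEq] at hEq
        obtain ⟨h1, h2⟩ := hEq
        have h3 := hkey a r har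
        rw [h1] at h3 h2
        omega
    have hinj : Set.InjOn g (Finset.range (r + 1)) := by
      intro a ha b hb hab
      simp only [Finset.coe_range, Set.mem_Iio] at ha hb
      rcases lt_trichotomy a b with h | h | h
      · exact absurd hab (hne a b h (by omega))
      · exact h
      · exact absurd hab.symm (hne b a h (by omega))
    have hlb : r + 1 ≤ S.card := by
      have := Finset.card_le_card_of_injOn g himg hinj
      simpa using this
    omega
  have h2 : (r : ℝ) / c i < ((P r i : ℤ) : ℝ) + 1 := by
    rw [div_lt_iff₀ (hc i)]
    push_cast
    linarith [key, hc i, (mul_comm (c i) ((P r i : ℝ) + 1))]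
  have h3 : ⌊(r : ℝ) / c i⌋ < (P r i : ℤ) + 1 := by
    apply Int.floor_lt.mpr
    push_cast
    push_cast at h2
    linarith
  omega
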